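/- Let n be an even positive integer. Then the limit A_n = lim_{k→∞} ∫₀^π |cosⁿ x − cosⁿ(kx)| dx (k ranging over the positive integers) exists and equals (16/π) · (n!/(n!!)²) · Σ_{j=0}^{(n−2)/2} ((2j)!!/(2j+1)!!) · (1/(2j+2)). -/

import Mathlib

open Real Filter MeasureTheory Topology intervalIntegral Nat

lemma cos_lip (a b : ℝ) : |Real.cos a - Real.cos b| ≤ |a - b| := by
  rw [Real.cos_sub_cos]
  have h1 : |Real.sin ((a+b)/2)| ≤ 1 := abs_le.mpr ⟨neg_one_le_sin _, sin_le_one _⟩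
  have h2 : |Real.sin ((a-b)/2)| ≤ |(a-b)/2| := Real.abs_sin_le_abs
  calc |(-2) * sin ((a+b)/2) * sin ((a-b)/2)| = 2 * |sin ((a+b)/2)| * |sin ((a-b)/2)| := by
        rw [abs_mul, abs_mul]; norm_num
    _ ≤ 2 * 1 * |(a-b)/2| := by gcongr
    _ = |a - b| := by rw [abs_div]; rw [abs_of_nonneg (by norm_num : (0:ℝ) ≤ 2)]; ring

lemma pow_lip (n : ℕ) (a b : ℝ) (ha : |a| ≤ 1) (hb : |b| ≤ 1) :
    |a ^ n - b ^ n| ≤ n * |a - b| := by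
  rw [← geom_sum₂_mul a b n, abs_mul]
  have : |∑ i ∈ Finset.range n, a ^ i * b ^ (n - 1 - i)| ≤ n := by
    calc |∑ i ∈ Finset.range n, a ^ i * b ^ (n - 1 - i)|
        ≤ ∑ i ∈ Finset.range n, |a ^ i * b ^ (n - 1 - i)| := Finset.abs_sum_le_sum_abs _ _
      _ ≤ ∑ i ∈ Finset.range n, 1 := by
          refine Finset.sum_le_sum fun i _ => ?_
          rw [abs_mul, abs_pow, abs_pow]
          exact mul_le_one₀ (pow_le_one₀ (abs_nonneg _) ha) (by positivity)
            (pow_le_one₀ (abs_nonneg _) hb)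
      _ = n := by simp
  calc |∑ i ∈ Finset.range n, a ^ i * b ^ (n - 1 - i)| * |a - b| ≤ n * |a - b| := by
        gcongr
    _ = n * |a - b| := rfl

lemma cospow_lip (n : ℕ) (x y : ℝ) : |Real.cos x ^ n - Real.cos y ^ n| ≤ n * |x - y| := by
  calc |Real.cos x ^ n - Real.cos y ^ n| ≤ n * |Real.cos x - Real.cos y| :=
        pow_lip n _ _ (abs_cos_le_one x) (abs_cos_le_one y)
    _ ≤ n * |x - y| := mul_le_mul_of_nonneg_left (cos_lip x y) (Nat.cast_nonneg n)


noncomputable def gI (n : ℕ) (s : ℝ) : ℝ := ∫ t in (0:ℝ)..s, Real.cos t ^ n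
noncomputable def FI (n : ℕ) (s : ℝ) : ℝ := ∫ t in (0:ℝ)..π, |Real.cos s ^ n - Real.cos t ^ n|

lemma cospow_pi_sub {n : ℕ} (hn : Even n) (x : ℝ) : Real.cos (π - x) ^ n = Real.cos x ^ n := by
  rw [Real.cos_pi_sub, hn.neg_pow]

lemma cospow_periodic {n : ℕ} (hn : Even n) : Function.Periodic (fun x => Real.cos x ^ n) π := by
  intro x
  simp only [Real.cos_add_pi, hn.neg_pow]

lemma refl_int {n : ℕ} (hn : Even n) (s : ℝ) :
    ∫ t in (π - s)..π, Real.cos t ^ n = gI n s := by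
  have h := intervalIntegral.integral_comp_sub_left (a := (0:ℝ)) (b := s)
    (fun t => Real.cos t ^ n) π
  simp only [sub_zero] at h
  rw [← h]
  simp only [cospow_pi_sub hn]
  rfl

lemma gI_pi_sub {n : ℕ} (hn : Even n) (s : ℝ) : gI n (π - s) = gI n π - gI n s := by
  have h : gI n (π - s) + ∫ t in (π - s)..π, Real.cos t ^ n = gI n π :=
    intervalIntegral.integral_add_adjacent_intervals
      ((Real.continuous_cos.pow n).intervalIntegrable _ _)
      ((Real.continuous_cos.pow n).intervalIntegrable _ _)
  rw [refl_int hn] at h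
  linarith

lemma F_formula {n : ℕ} (hn : Even n) {s : ℝ} (hs0 : 0 ≤ s) (hs : s ≤ π / 2) :
    FI n s = 4 * gI n s - gI n π + (π - 4 * s) * Real.cos s ^ n := by
  have hπ := Real.pi_pos
  have hcont : Continuous fun t => Real.cos t ^ n := Real.continuous_cos.pow n
  have hcs : 0 ≤ Real.cos s := Real.cos_nonneg_of_mem_Icc ⟨by linarith, hs⟩
  set c := Real.cos s ^ n with hc
  -- piece 1 : [0, s]
  have h1 : (∫ t in (0:ℝ)..s, |c - Real.cos t ^ n|) = gI n s - s * c := by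
    have he : Set.EqOn (fun t => |c - Real.cos t ^ n|) (fun t => Real.cos t ^ n - c)
        (Set.uIcc 0 s) := by
      intro t ht
      rw [Set.uIcc_of_le hs0] at ht
      have h1 : Real.cos s ≤ Real.cos t :=
        Real.cos_le_cos_of_nonneg_of_le_pi ht.1 (by linarith) ht.2
      have hle : c ≤ Real.cos t ^ n := pow_le_pow_left₀ hcs h1 n
      show |c - Real.cos t ^ n| = Real.cos t ^ n - c
      rw [abs_sub_comm, abs_of_nonneg (sub_nonneg.mpr hle)]
    rw [intervalIntegral.integral_congr he, intervalIntegral.integral_sub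
      (hcont.intervalIntegrable _ _) (continuous_const.intervalIntegrable _ _)]
    rw [intervalIntegral.integral_const, smul_eq_mul]
    show gI n s - (s - 0) * c = gI n s - s * c
    ring
  -- piece 3 : [π - s, π]
  have h3 : (∫ t in (π - s)..π, |c - Real.cos t ^ n|) = gI n s - s * c := by
    have he : Set.EqOn (fun t => |c - Real.cos t ^ n|) (fun t => Real.cos t ^ n - c)
        (Set.uIcc (π - s) π) := by
      intro t ht
      rw [Set.uIcc_of_le (by linarith)] at ht
      have h1 : Real.cos t ≤ Real.cos (π - s) :=
        Real.cos_le_cos_of_nonneg_of_le_pi (by linarith [ht.1]) ht.2 ht.1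
      rw [Real.cos_pi_sub] at h1
      have h2 : Real.cos s ≤ -Real.cos t := by linarith
      have hle : c ≤ Real.cos t ^ n := by
        calc c ≤ (-Real.cos t) ^ n := pow_le_pow_left₀ hcs h2 n
          _ = Real.cos t ^ n := hn.neg_pow _
      show |c - Real.cos t ^ n| = Real.cos t ^ n - c
      rw [abs_sub_comm, abs_of_nonneg (sub_nonneg.mpr hle)]
    rw [intervalIntegral.integral_congr he, intervalIntegral.integral_sub
      (hcont.intervalIntegrable _ _) (continuous_const.intervalIntegrable _ _)]
    rw [refl_int hn, intervalIntegral.integral_const, smul_eq_mul]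
    ring
  -- piece 2 : [s, π - s]
  have hmid : (∫ t in s..(π - s), Real.cos t ^ n) = gI n π - 2 * gI n s := by
    have h := intervalIntegral.integral_interval_sub_left (μ := volume) (a := (0:ℝ)) (b := π - s) (c := s)
      (hcont.intervalIntegrable _ _) (hcont.intervalIntegrable _ _)
    have h2 : gI n (π - s) - gI n s = ∫ t in s..(π - s), Real.cos t ^ n := h
    rw [gI_pi_sub hn] at h2
    linarith
  have h2 : (∫ t in s..(π - s), |c - Real.cos t ^ n|)
      = (π - 2 * s) * c - (gI n π - 2 * gI n s) := by
    have he : Set.EqOn (fun t => |c - Real.cos t ^ n|) (fun t => c - Real.cos t ^ n)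
        (Set.uIcc s (π - s)) := by
      intro t ht
      rw [Set.uIcc_of_le (by linarith)] at ht
      have hA : Real.cos t ≤ Real.cos s :=
        Real.cos_le_cos_of_nonneg_of_le_pi hs0 (by linarith [ht.2]) ht.1
      have hB : Real.cos (π - s) ≤ Real.cos t :=
        Real.cos_le_cos_of_nonneg_of_le_pi (by linarith [ht.1]) (by linarith) ht.2
      rw [Real.cos_pi_sub] at hB
      have habs : |Real.cos t| ≤ Real.cos s := abs_le.mpr ⟨by linarith, hA⟩
      have hle : Real.cos t ^ n ≤ c := by
        calc Real.cos t ^ n = |Real.cos t| ^ n := (hn.pow_abs _).symm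
          _ ≤ Real.cos s ^ n := pow_le_pow_left₀ (abs_nonneg _) habs n
      exact abs_of_nonneg (sub_nonneg.mpr hle)
    rw [intervalIntegral.integral_congr he, intervalIntegral.integral_sub
      (continuous_const.intervalIntegrable _ _) (hcont.intervalIntegrable _ _)]
    rw [hmid, intervalIntegral.integral_const, smul_eq_mul]
    ring
  -- combine
  have hsum : FI n s = (∫ t in (0:ℝ)..s, |c - Real.cos t ^ n|)
      + (∫ t in s..(π - s), |c - Real.cos t ^ n|)
      + (∫ t in (π - s)..π, |c - Real.cos t ^ n|) := by
    rw [FI]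
    show ∫ t in (0:ℝ)..π, |c - Real.cos t ^ n| = _
    rw [← intervalIntegral.integral_add_adjacent_intervals (f := fun t => |c - Real.cos t ^ n|) (a := (0:ℝ)) (b := π - s) (c := π)
      (((continuous_const.sub hcont).abs).intervalIntegrable _ _)
      (((continuous_const.sub hcont).abs).intervalIntegrable _ _),
      ← intervalIntegral.integral_add_adjacent_intervals (f := fun t => |c - Real.cos t ^ n|) (a := (0:ℝ)) (b := s) (c := π - s)
      (((continuous_const.sub hcont).abs).intervalIntegrable _ _)
      (((continuous_const.sub hcont).abs).intervalIntegrable _ _)]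
  rw [hsum, h1, h2, h3]
  ring


noncomputable def cp (m : ℕ) : ℝ := ∏ i ∈ Finset.range m, (2*(i:ℝ)+1)/(2*i+2)
noncomputable def SS (m : ℕ) : ℝ :=
  ∑ j ∈ Finset.range m, (Nat.doubleFactorial (2*j) : ℝ)/(Nat.doubleFactorial (2*j+1) : ℝ) * (1/(2*(j:ℝ)+2))
noncomputable def JJ (m : ℕ) : ℝ := ∫ x in (0:ℝ)..(π/2), x * Real.cos x ^ (2*m)

lemma W_eq (m : ℕ) : ∫ x in (0:ℝ)..(π/2), Real.cos x ^ (2*m) = π/2 * cp m := by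
  have h0 : (∫ x in (0:ℝ)..π, Real.sin x ^ (2*m)) = π * cp m := integral_sin_pow_even m
  have h1 : (∫ x in (-(π/2))..(π/2), Real.sin (x + π/2) ^ (2*m))
      = ∫ x in (0:ℝ)..π, Real.sin x ^ (2*m) := by
    have := intervalIntegral.integral_comp_add_right (a := -(π/2)) (b := π/2)
      (fun x => Real.sin x ^ (2*m)) (π/2)
    simpa [add_halves] using this
  have h2 : (∫ x in (-(π/2))..(π/2), Real.cos x ^ (2*m)) = π * cp m := by
    rw [← h0, ← h1]
    congr 1
    ext x
    rw [Real.sin_add_pi_div_two]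
  have h3 : (∫ x in (-(π/2))..(0:ℝ), Real.cos x ^ (2*m))
      = ∫ x in (0:ℝ)..(π/2), Real.cos x ^ (2*m) := by
    have := intervalIntegral.integral_comp_neg (a := (0:ℝ)) (b := π/2)
      (fun x => Real.cos x ^ (2*m))
    simp only [Real.cos_neg, neg_zero] at this
    rw [← this]
  have h4 : (∫ x in (-(π/2))..(0:ℝ), Real.cos x ^ (2*m))
      + ∫ x in (0:ℝ)..(π/2), Real.cos x ^ (2*m)
      = ∫ x in (-(π/2))..(π/2), Real.cos x ^ (2*m) :=
    intervalIntegral.integral_add_adjacent_intervals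
      ((Real.continuous_cos.pow _).intervalIntegrable _ _)
      ((Real.continuous_cos.pow _).intervalIntegrable _ _)
  rw [h3, h2] at h4
  linarith

lemma JJ_zero : JJ 0 = π^2/8 := by
  simp only [JJ, Nat.mul_zero, pow_zero, mul_one, integral_id]
  ring

lemma JJ_rec (m : ℕ) : JJ (m+1) = (2*m+1)/(2*m+2) * JJ m - 1/(2*m+2)^2 := by
  have hne : (2*(m:ℝ)+2) ≠ 0 := by positivity
  set h' : ℝ → ℝ := fun x => Real.cos x ^ (2*m+1) * Real.sin x +
      ((2*(m:ℝ)+2) * (x * Real.cos x ^ (2*m+2)) - (2*(m:ℝ)+1) * (x * Real.cos x ^ (2*m))) with hh'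
  have hder : ∀ x ∈ Set.uIcc (0:ℝ) (π/2), HasDerivAt
      (fun y => y * Real.cos y ^ (2*m+1) * Real.sin y) (h' x) x := by
    intro x _
    have h2 : HasDerivAt (fun y => Real.cos y ^ (2*m+1))
        ((2*m+1 : ℕ) * Real.cos x ^ (2*m) * (-Real.sin x)) x := by
      have := (Real.hasDerivAt_cos x).pow (2*m+1)
      simp only [Nat.add_sub_cancel] at this
      exact this
    have h3 := ((hasDerivAt_id x).mul h2).mul (Real.hasDerivAt_sin x)
    refine h3.congr_deriv ?_
    have hs := Real.sin_sq_add_cos_sq x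
    simp only [hh', id_eq, Pi.mul_apply]
    push_cast
    linear_combination (-(2*(m:ℝ)+1)) * x * Real.cos x ^ (2*m) * hs
  have hint : (∫ x in (0:ℝ)..(π/2), h' x)
      = (π/2) * Real.cos (π/2) ^ (2*m+1) * Real.sin (π/2) - 0 * Real.cos 0 ^ (2*m+1) * Real.sin 0 := by
    apply intervalIntegral.integral_eq_sub_of_hasDerivAt hder
    apply Continuous.intervalIntegrable
    fun_prop
  rw [Real.cos_pi_div_two, Real.sin_zero] at hint
  simp only [zero_pow (Nat.succ_ne_zero _), mul_zero, zero_mul, sub_zero] at hint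
  -- ∫ cos^(2m+1) sin = 1/(2m+2)
  have hpart : (∫ x in (0:ℝ)..(π/2), Real.cos x ^ (2*m+1) * Real.sin x) = 1/(2*(m:ℝ)+2) := by
    have hder2 : ∀ x ∈ Set.uIcc (0:ℝ) (π/2), HasDerivAt
        (fun y => -(Real.cos y ^ (2*m+2)) / (2*(m:ℝ)+2)) (Real.cos x ^ (2*m+1) * Real.sin x) x := by
      intro x _
      have h2 : HasDerivAt (fun y => Real.cos y ^ (2*m+2))
          ((2*m+2 : ℕ) * Real.cos x ^ (2*m+1) * (-Real.sin x)) x := by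
        have := (Real.hasDerivAt_cos x).pow (2*m+2)
        refine this.congr_deriv ?_
        rfl
      have := (h2.neg).div_const (2*(m:ℝ)+2)
      refine this.congr_deriv ?_
      push_cast
      field_simp
    have := intervalIntegral.integral_eq_sub_of_hasDerivAt hder2
      (by apply Continuous.intervalIntegrable; fun_prop)
    rw [this, Real.cos_pi_div_two, Real.cos_zero]
    rw [zero_pow (Nat.succ_ne_zero _), one_pow]
    ring
  -- split the integral of h'
  have hsplit : (∫ x in (0:ℝ)..(π/2), h' x)
      = (∫ x in (0:ℝ)..(π/2), Real.cos x ^ (2*m+1) * Real.sin x)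
        + ((2*(m:ℝ)+2) * (∫ x in (0:ℝ)..(π/2), x * Real.cos x ^ (2*m+2))
          - (2*(m:ℝ)+1) * ∫ x in (0:ℝ)..(π/2), x * Real.cos x ^ (2*m)) := by
    rw [← intervalIntegral.integral_const_mul, ← intervalIntegral.integral_const_mul,
      ← intervalIntegral.integral_sub (by apply Continuous.intervalIntegrable; fun_prop)
        (by apply Continuous.intervalIntegrable; fun_prop),
      ← intervalIntegral.integral_add (by apply Continuous.intervalIntegrable; fun_prop)
        (by apply Continuous.intervalIntegrable; fun_prop)]
  have h2m2 : 2*(m+1) = 2*m+2 := by ring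
  have hJJ1 : JJ (m+1) = ∫ x in (0:ℝ)..(π/2), x * Real.cos x ^ (2*m+2) := by
    rw [JJ, h2m2]
  have hJJ0 : (∫ x in (0:ℝ)..(π/2), x * Real.cos x ^ (2*m)) = JJ m := rfl
  rw [hint, hpart, ← hJJ1, hJJ0] at hsplit
  have h5 : JJ (m+1) = ((2*(m:ℝ)+1) * JJ m - 1/(2*(m:ℝ)+2)) / (2*(m:ℝ)+2) := by
    rw [eq_div_iff hne]
    linarith
  rw [h5]
  field_simp

lemma cp_succ (m : ℕ) : cp (m+1) = cp m * ((2*(m:ℝ)+1)/(2*m+2)) := Finset.prod_range_succ _ m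

lemma cp_mul_df : ∀ m : ℕ, cp m * ((2*m)‼ : ℝ) = ((2*m-1)‼ : ℝ)
  | 0 => by simp [cp]
  | (m+1) => by
    have h1 : 2*(m+1) = (2*m)+2 := by ring
    have h2 : (2*m)+2-1 = (2*m)+1 := by omega
    rw [h1, h2, cp_succ, Nat.doubleFactorial_add_two, Nat.doubleFactorial_add_one]
    have ih := cp_mul_df m
    push_cast
    have hne : (2*(m:ℝ)+2) ≠ 0 := by positivity
    field_simp
    linear_combination ih

lemma doubleFactorial_cast_pos (k : ℕ) : (0:ℝ) < (k‼ : ℝ) := by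
  exact_mod_cast Nat.doubleFactorial_pos k

lemma J_closed : ∀ m : ℕ, JJ m = cp m * (π^2/8 - SS m)
  | 0 => by simp [JJ_zero, cp, SS]
  | (m+1) => by
    have ih := J_closed m
    have hrec := JJ_rec m
    have hS : SS (m+1) = SS m + ((2*m)‼ : ℝ)/((2*m+1)‼ : ℝ) * (1/(2*(m:ℝ)+2)) :=
      Finset.sum_range_succ _ m
    have hcp := cp_succ m
    -- key : cp (m+1) * ((2*m)‼/(2*m+1)‼) = 1/(2*m+2)
    have hkey : cp (m+1) * (((2*m)‼ : ℝ)/((2*m+1)‼ : ℝ)) = 1/(2*(m:ℝ)+2) := by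
      have h1 := cp_mul_df (m+1)
      have e1 : 2*(m+1) = (2*m)+2 := by ring
      have e2 : (2*m)+2-1 = (2*m)+1 := by omega
      rw [e1, e2, Nat.doubleFactorial_add_two] at h1
      push_cast at h1
      have hne : (2*(m:ℝ)+2) ≠ 0 := by positivity
      have hdf1 : ((2*m+1)‼ : ℝ) ≠ 0 := (doubleFactorial_cast_pos _).ne'
      have hdf2 : ((2*m)‼ : ℝ) ≠ 0 := (doubleFactorial_cast_pos _).ne'
      field_simp
      linear_combination h1
    rw [hrec, ih, hS, hcp]
    have hne : (2*(m:ℝ)+2) ≠ 0 := by positivity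
    have hclean : cp m * (2*(m:ℝ)+1) * ((2*m)‼ : ℝ) = ((2*m+1)‼ : ℝ) := by
      have ih2 := cp_mul_df m
      rw [Nat.doubleFactorial_add_one]
      push_cast
      linear_combination (2*(m:ℝ)+1) * ih2
    have hdf1 : ((2*m+1)‼ : ℝ) ≠ 0 := (doubleFactorial_cast_pos _).ne'
    field_simp
    linear_combination 8 * hclean


lemma FI_lip (n : ℕ) (a b : ℝ) : |FI n a - FI n b| ≤ (n * |a - b|) * π := by
  have hcont : Continuous fun t => Real.cos t ^ n := Real.continuous_cos.pow n
  rw [FI, FI, ← intervalIntegral.integral_sub (f := fun t => |Real.cos a ^ n - Real.cos t ^ n|)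
    (g := fun t => |Real.cos b ^ n - Real.cos t ^ n|)
    (((continuous_const.sub hcont).abs).intervalIntegrable _ _)
    (((continuous_const.sub hcont).abs).intervalIntegrable _ _)]
  have h := intervalIntegral.norm_integral_le_of_norm_le_const
    (a := (0:ℝ)) (b := π) (C := (n : ℝ) * |a - b|)
    (f := fun t => |Real.cos a ^ n - Real.cos t ^ n| - |Real.cos b ^ n - Real.cos t ^ n|) ?_
  · rw [Real.norm_eq_abs] at h
    calc |∫ t in (0:ℝ)..π, (|Real.cos a ^ n - Real.cos t ^ n| - |Real.cos b ^ n - Real.cos t ^ n|)|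
        ≤ (n : ℝ) * |a - b| * |π - 0| := h
      _ = (n : ℝ) * |a - b| * π := by rw [sub_zero, abs_of_nonneg Real.pi_pos.le]
  · intro t _
    rw [Real.norm_eq_abs]
    calc |(|Real.cos a ^ n - Real.cos t ^ n| - |Real.cos b ^ n - Real.cos t ^ n|)|
        ≤ |(Real.cos a ^ n - Real.cos t ^ n) - (Real.cos b ^ n - Real.cos t ^ n)| :=
          abs_abs_sub_abs_le_abs_sub _ _
      _ = |Real.cos a ^ n - Real.cos b ^ n| := by ring_nf
      _ ≤ n * |a - b| := cospow_lip n a b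

lemma FI_cont (n : ℕ) : Continuous (FI n) := by
  have : LipschitzWith ⟨(n : ℝ) * π, by positivity⟩ (FI n) := by
    apply LipschitzWith.of_dist_le_mul
    intro a b
    rw [Real.dist_eq, Real.dist_eq]
    calc |FI n a - FI n b| ≤ ((n : ℝ) * |a - b|) * π := FI_lip n a b
      _ = ((n : ℝ) * π) * |a - b| := by ring
  exact this.continuous

lemma FI_symm {n : ℕ} (hn : Even n) (s : ℝ) : FI n (π - s) = FI n s := by
  rw [FI, FI]
  congr 1
  ext t
  rw [cospow_pi_sub hn]

lemma gI_hasDeriv (n : ℕ) (x : ℝ) : HasDerivAt (gI n) (Real.cos x ^ n) x :=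
  intervalIntegral.integral_hasDerivAt_right
    ((Real.continuous_cos.pow n).intervalIntegrable _ _)
    ((Real.continuous_cos.pow n).stronglyMeasurableAtFilter _ _)
    (Real.continuous_cos.pow n).continuousAt

lemma gI_cont (n : ℕ) : Continuous (gI n) := by
  have : Differentiable ℝ (gI n) := fun x => (gI_hasDeriv n x).differentiableAt
  exact this.continuous

lemma gI_pi (m : ℕ) : gI (2*m) π = 2 * gI (2*m) (π/2) := by
  have h : gI (2*m) (π/2) + ∫ t in (π/2)..π, Real.cos t ^ (2*m) = gI (2*m) π :=
    intervalIntegral.integral_add_adjacent_intervals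
      ((Real.continuous_cos.pow _).intervalIntegrable _ _)
      ((Real.continuous_cos.pow _).intervalIntegrable _ _)
  have h2 := refl_int (n := 2*m) ⟨m, by ring⟩ (π/2)
  rw [show π - π/2 = π/2 by ring] at h2
  rw [h2] at h
  linarith

lemma int_gI (m : ℕ) : ∫ s in (0:ℝ)..(π/2), gI (2*m) s
    = gI (2*m) (π/2) * (π/2) - JJ m := by
  have hcont : Continuous fun t => Real.cos t ^ (2*m) := Real.continuous_cos.pow _
  have h := intervalIntegral.integral_mul_deriv_eq_deriv_mul
    (u := gI (2*m)) (u' := fun x => Real.cos x ^ (2*m)) (v := fun x => x) (v' := fun _ => 1)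
    (a := (0:ℝ)) (b := π/2)
    (fun x _ => gI_hasDeriv (2*m) x) (fun x _ => hasDerivAt_id x)
    (hcont.intervalIntegrable _ _) (continuous_const.intervalIntegrable _ _)
  simp only [mul_one] at h
  have h0 : gI (2*m) 0 = 0 := intervalIntegral.integral_same
  have hJ : (∫ x in (0:ℝ)..(π/2), Real.cos x ^ (2*m) * x) = JJ m := by
    rw [JJ]
    congr 1
    ext x
    ring
  rw [h, h0, hJ]
  ring

lemma intF (m : ℕ) : ∫ s in (0:ℝ)..π, FI (2*m) s
    = 4*π*(gI (2*m) (π/2)) - 16 * JJ m := by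
  have hn : Even (2*m) := ⟨m, by ring⟩
  have hπ := Real.pi_pos
  have hcont : Continuous fun t => Real.cos t ^ (2*m) := Real.continuous_cos.pow _
  set W := gI (2*m) (π/2) with hW
  -- half integral
  have hhalf : ∫ s in (0:ℝ)..(π/2), FI (2*m) s = 2*π*W - 8*JJ m := by
    have he : Set.EqOn (FI (2*m))
        (fun s => 4 * gI (2*m) s - gI (2*m) π + (π - 4*s) * Real.cos s ^ (2*m))
        (Set.uIcc 0 (π/2)) := by
      intro s hs
      rw [Set.uIcc_of_le (by linarith)] at hs
      exact F_formula hn hs.1 hs.2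
    rw [intervalIntegral.integral_congr he]
    have hint1 : IntervalIntegrable (fun s => 4 * gI (2*m) s - gI (2*m) π) volume 0 (π/2) :=
      ((continuous_const.mul (gI_cont _)).sub continuous_const).intervalIntegrable _ _
    have hint2 : IntervalIntegrable (fun s => (π - 4*s) * Real.cos s ^ (2*m)) volume 0 (π/2) :=
      (((continuous_const.sub (continuous_const.mul continuous_id)).mul hcont)).intervalIntegrable _ _
    rw [intervalIntegral.integral_add hint1 hint2]
    have e1 : (∫ s in (0:ℝ)..(π/2), (4 * gI (2*m) s - gI (2*m) π))
        = 4 * (W * (π/2) - JJ m) - (π/2) * gI (2*m) π := by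
      rw [intervalIntegral.integral_sub (f := fun s => 4 * gI (2*m) s) ((continuous_const.mul (gI_cont _)).intervalIntegrable _ _)
        (continuous_const.intervalIntegrable _ _),
        intervalIntegral.integral_const_mul, int_gI, intervalIntegral.integral_const, smul_eq_mul]
      ring
    have e2 : (∫ s in (0:ℝ)..(π/2), (π - 4*s) * Real.cos s ^ (2*m))
        = π * W - 4 * JJ m := by
      have : (fun s => (π - 4*s) * Real.cos s ^ (2*m))
          = fun s => π * Real.cos s ^ (2*m) - 4 * (s * Real.cos s ^ (2*m)) := by
        ext s; ring
      rw [this, intervalIntegral.integral_sub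
        (Continuous.intervalIntegrable (by fun_prop) _ _ :
          IntervalIntegrable (fun s => π * Real.cos s ^ (2*m)) volume 0 (π/2))
        (Continuous.intervalIntegrable (by fun_prop) _ _ :
          IntervalIntegrable (fun s => 4 * (s * Real.cos s ^ (2*m))) volume 0 (π/2)),
        intervalIntegral.integral_const_mul, intervalIntegral.integral_const_mul]
      rw [show (∫ s in (0:ℝ)..(π/2), Real.cos s ^ (2*m)) = W from rfl]
      rw [show (∫ s in (0:ℝ)..(π/2), s * Real.cos s ^ (2*m)) = JJ m from rfl]
    rw [e1, e2, gI_pi, ← hW]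
    ring
  -- reflection
  have hrefl : ∫ s in (π/2)..π, FI (2*m) s = ∫ s in (0:ℝ)..(π/2), FI (2*m) s := by
    have h := intervalIntegral.integral_comp_sub_left (a := (0:ℝ)) (b := π/2) (FI (2*m)) π
    simp only [sub_zero, show π - π/2 = π/2 by ring] at h
    rw [← h]
    congr 1
    ext s
    rw [FI_symm hn]
  have hsplit : (∫ s in (0:ℝ)..(π/2), FI (2*m) s) + ∫ s in (π/2)..π, FI (2*m) s
      = ∫ s in (0:ℝ)..π, FI (2*m) s :=
    intervalIntegral.integral_add_adjacent_intervals
      ((FI_cont _).intervalIntegrable _ _) ((FI_cont _).intervalIntegrable _ _)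
  rw [hrefl, hhalf] at hsplit
  rw [← hsplit]
  ring

lemma key_bound (n : ℕ) (hn : Even n) (k : ℕ) (hk : 1 ≤ k) :
    |(∫ x in (0:ℝ)..π, |Real.cos x ^ n - Real.cos (k * x) ^ n|)
      - (1/π) * ∫ s in (0:ℝ)..π, FI n s| ≤ 2*n*π^2/k := by
  have hπ := Real.pi_pos
  have hk0 : (0:ℝ) < k := by exact_mod_cast hk
  have hkne : (k:ℝ) ≠ 0 := hk0.ne'
  set a : ℕ → ℝ := fun j => j * (π/k) with ha
  have ha0 : a 0 = 0 := by simp [ha]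
  have hak : a k = π := by simp only [ha]; field_simp
  have hastep : ∀ j : ℕ, a (j+1) - a j = π/k := by
    intro j; simp only [ha]; push_cast; ring
  have hstep_pos : (0:ℝ) < π/k := by positivity
  have hcont1 : Continuous fun x => |Real.cos x ^ n - Real.cos (k * x) ^ n| := by fun_prop
  -- sum decompositions
  have hI : (∫ x in (0:ℝ)..π, |Real.cos x ^ n - Real.cos (k * x) ^ n|)
      = ∑ j ∈ Finset.range k, ∫ x in a j..a (j+1), |Real.cos x ^ n - Real.cos (k * x) ^ n| := by
    have := intervalIntegral.sum_integral_adjacent_intervals (μ := volume) (a := a) (n := k)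
      (f := fun x => |Real.cos x ^ n - Real.cos (k * x) ^ n|)
      (fun i _ => hcont1.intervalIntegrable _ _)
    rw [ha0, hak] at this
    rw [this]
  have hA : (∫ s in (0:ℝ)..π, FI n s)
      = ∑ j ∈ Finset.range k, ∫ s in a j..a (j+1), FI n s := by
    have := intervalIntegral.sum_integral_adjacent_intervals (μ := volume) (a := a) (n := k)
      (f := FI n) (fun i _ => (FI_cont n).intervalIntegrable _ _)
    rw [ha0, hak] at this
    rw [this]
  -- per-interval bound
  have hbound : ∀ j : ℕ, |(∫ x in a j..a (j+1), |Real.cos x ^ n - Real.cos (k * x) ^ n|)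
      - (1/π) * ∫ s in a j..a (j+1), FI n s| ≤ 2*n*π^2/k^2 := by
    intro j
    have hcont2 : Continuous fun x => |Real.cos (a j) ^ n - Real.cos (k * x) ^ n| := by fun_prop
    -- middle integral value
    have hmid : (∫ x in a j..a (j+1), |Real.cos (a j) ^ n - Real.cos (k * x) ^ n|)
        = (1/(k:ℝ)) * FI n (a j) := by
      have hcm := intervalIntegral.integral_comp_mul_left (a := a j) (b := a (j+1))
        (fun u => |Real.cos (a j) ^ n - Real.cos u ^ n|) hkne
      have e1 : (k:ℝ) * a j = j * π := by simp only [ha]; field_simp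
      have e2 : (k:ℝ) * a (j+1) = j * π + π := by simp only [ha]; push_cast; field_simp
      rw [e1, e2] at hcm
      have hper : Function.Periodic (fun u => |Real.cos (a j) ^ n - Real.cos u ^ n|) π := by
        intro u
        have := cospow_periodic hn u
        simp only at this ⊢
        rw [this]
      have hper2 := hper.intervalIntegral_add_eq ((j:ℝ) * π) 0
      rw [zero_add] at hper2
      rw [hcm, hper2]
      rw [FI]
      rw [smul_eq_mul, one_div]
    -- E1
    have hE1 : |∫ x in a j..a (j+1), (|Real.cos x ^ n - Real.cos (k * x) ^ n|
        - |Real.cos (a j) ^ n - Real.cos (k * x) ^ n|)| ≤ ((n:ℝ) * (π/k)) * (π/k) := by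
      have h := intervalIntegral.norm_integral_le_of_norm_le_const
        (a := a j) (b := a (j+1)) (C := (n:ℝ) * (π/k))
        (f := fun x => |Real.cos x ^ n - Real.cos (k * x) ^ n|
          - |Real.cos (a j) ^ n - Real.cos (k * x) ^ n|) ?_
      · rw [Real.norm_eq_abs, hastep j, abs_of_pos hstep_pos] at h
        exact h
      · intro x hx
        rw [Set.uIoc_of_le (by linarith [hastep j]), Set.mem_Ioc] at hx
        rw [Real.norm_eq_abs]
        calc |(|Real.cos x ^ n - Real.cos (k*x) ^ n| - |Real.cos (a j) ^ n - Real.cos (k*x) ^ n|)|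
            ≤ |(Real.cos x ^ n - Real.cos (k*x) ^ n) - (Real.cos (a j) ^ n - Real.cos (k*x) ^ n)| :=
              abs_abs_sub_abs_le_abs_sub _ _
          _ = |Real.cos x ^ n - Real.cos (a j) ^ n| := by ring_nf
          _ ≤ n * |x - a j| := cospow_lip n x (a j)
          _ ≤ (n:ℝ) * (π/k) := by
              have h1 : x - a j ≤ π/k := by linarith [hastep j, hx.2]
              have h2 : 0 ≤ x - a j := by linarith [hx.1]
              gcongr
              rw [abs_of_nonneg h2]
              exact h1
    -- E2
    have hE2 : |∫ s in a j..a (j+1), (FI n (a j) - FI n s)| ≤ (((n:ℝ) * (π/k)) * π) * (π/k) := by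
      have h := intervalIntegral.norm_integral_le_of_norm_le_const
        (a := a j) (b := a (j+1)) (C := ((n:ℝ) * (π/k)) * π)
        (f := fun s => FI n (a j) - FI n s) ?_
      · rw [Real.norm_eq_abs, hastep j, abs_of_pos hstep_pos] at h
        exact h
      · intro s hs
        rw [Set.uIoc_of_le (by linarith [hastep j]), Set.mem_Ioc] at hs
        rw [Real.norm_eq_abs]
        calc |FI n (a j) - FI n s| ≤ ((n:ℝ) * |a j - s|) * π := FI_lip n (a j) s
          _ ≤ (((n:ℝ) * (π/k)) * π) := by
              have h1 : s - a j ≤ π/k := by linarith [hastep j, hs.2]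
              have h2 : 0 ≤ s - a j := by linarith [hs.1]
              gcongr
              rw [abs_sub_comm, abs_of_nonneg h2]
              exact h1
    -- assemble
    have hsub1 : (∫ x in a j..a (j+1), |Real.cos x ^ n - Real.cos (k * x) ^ n|)
        = (∫ x in a j..a (j+1), (|Real.cos x ^ n - Real.cos (k * x) ^ n|
            - |Real.cos (a j) ^ n - Real.cos (k * x) ^ n|)) + (1/(k:ℝ)) * FI n (a j) := by
      rw [← hmid, intervalIntegral.integral_sub (hcont1.intervalIntegrable _ _)
        (hcont2.intervalIntegrable _ _)]
      ring
    have hsub2 : (1/π) * (∫ s in a j..a (j+1), FI n s)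
        = (1/(k:ℝ)) * FI n (a j) - (1/π) * ∫ s in a j..a (j+1), (FI n (a j) - FI n s) := by
      rw [intervalIntegral.integral_sub (continuous_const.intervalIntegrable _ _)
        ((FI_cont n).intervalIntegrable _ _), intervalIntegral.integral_const, hastep j,
        smul_eq_mul]
      field_simp
      ring
    rw [hsub1, hsub2]
    have habs : |(∫ x in a j..a (j+1), (|Real.cos x ^ n - Real.cos (k * x) ^ n|
            - |Real.cos (a j) ^ n - Real.cos (k * x) ^ n|)) + (1/(k:ℝ)) * FI n (a j)
        - ((1/(k:ℝ)) * FI n (a j) - (1/π) * ∫ s in a j..a (j+1), (FI n (a j) - FI n s))|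
        = |(∫ x in a j..a (j+1), (|Real.cos x ^ n - Real.cos (k * x) ^ n|
            - |Real.cos (a j) ^ n - Real.cos (k * x) ^ n|))
          + (1/π) * ∫ s in a j..a (j+1), (FI n (a j) - FI n s)| := by
      congr 1
      ring
    rw [habs]
    calc |(∫ x in a j..a (j+1), (|Real.cos x ^ n - Real.cos (k * x) ^ n|
            - |Real.cos (a j) ^ n - Real.cos (k * x) ^ n|))
          + (1/π) * ∫ s in a j..a (j+1), (FI n (a j) - FI n s)|
        ≤ |∫ x in a j..a (j+1), (|Real.cos x ^ n - Real.cos (k * x) ^ n|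
            - |Real.cos (a j) ^ n - Real.cos (k * x) ^ n|)|
          + |(1/π) * ∫ s in a j..a (j+1), (FI n (a j) - FI n s)| := abs_add_le _ _
      _ ≤ ((n:ℝ) * (π/k)) * (π/k) + (1/π) * ((((n:ℝ) * (π/k)) * π) * (π/k)) := by
          refine add_le_add hE1 ?_
          rw [abs_mul, abs_of_pos (by positivity : (0:ℝ) < 1/π)]
          exact mul_le_mul_of_nonneg_left hE2 (by positivity)
      _ = 2*n*π^2/k^2 := by field_simp; ring
  -- sum up
  rw [hI, hA, Finset.mul_sum, ← Finset.sum_sub_distrib]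
  calc |∑ j ∈ Finset.range k, ((∫ x in a j..a (j+1), |Real.cos x ^ n - Real.cos (k * x) ^ n|)
        - (1/π) * ∫ s in a j..a (j+1), FI n s)|
      ≤ ∑ j ∈ Finset.range k, |(∫ x in a j..a (j+1), |Real.cos x ^ n - Real.cos (k * x) ^ n|)
        - (1/π) * ∫ s in a j..a (j+1), FI n s| := Finset.abs_sum_le_sum_abs _ _
    _ ≤ ∑ _j ∈ Finset.range k, 2*n*π^2/k^2 := Finset.sum_le_sum (fun j _ => hbound j)
    _ = k * (2*n*π^2/k^2) := by rw [Finset.sum_const, Finset.card_range]; ring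
    _ = 2*n*π^2/k := by field_simp

lemma fac_div_df_sq (m : ℕ) (hm : 1 ≤ m) :
    ((Nat.factorial (2*m) : ℝ)) / ((Nat.doubleFactorial (2*m) : ℝ))^2 = cp m := by
  have h1 := Nat.factorial_eq_mul_doubleFactorial (2*m - 1)
  have e1 : (2*m - 1) + 1 = 2*m := by omega
  have e2 : (2*m - 1) - 1 = 2*m - 2 := by omega
  rw [e1] at h1
  -- h1 : (2*m)! = (2*m)‼ * (2*m-1)‼
  have hdf : ((2*m)‼ : ℝ) ≠ 0 := (doubleFactorial_cast_pos _).ne'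
  have hcp := cp_mul_df m
  rw [h1]
  push_cast
  field_simp
  linear_combination (-1:ℝ) * hcp

theorem area_even_power_doubleFactorial (n : ℕ) (hn : Even n) (hpos : 0 < n) :
    Tendsto (fun k : ℕ => ∫ x in (0:ℝ)..π, |Real.cos x ^ n - Real.cos (k * x) ^ n|)
      atTop
      (𝓝 (16 / π * ((n.factorial : ℝ) / (Nat.doubleFactorial n : ℝ) ^ 2) *
        ∑ j ∈ Finset.range ((n - 2) / 2 + 1),
          (Nat.doubleFactorial (2 * j) : ℝ) / (Nat.doubleFactorial (2 * j + 1) : ℝ) *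
            (1 / (2 * (j : ℝ) + 2)))) := by
  have hπ := Real.pi_pos
  obtain ⟨m, hm⟩ := hn
  have hn2 : n = 2*m := by omega
  subst hn2
  have hm1 : 1 ≤ m := by omega
  have hEven : Even (2*m) := ⟨m, by ring⟩
  set A := (1/π) * ∫ s in (0:ℝ)..π, FI (2*m) s with hA
  have htend : Tendsto (fun k : ℕ =>
      ∫ x in (0:ℝ)..π, |Real.cos x ^ (2*m) - Real.cos (k * x) ^ (2*m)|) atTop (𝓝 A) := by
    have hdiff : Tendsto (fun k : ℕ =>
        (∫ x in (0:ℝ)..π, |Real.cos x ^ (2*m) - Real.cos (k * x) ^ (2*m)|) - A) atTop (𝓝 0) := by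
      refine squeeze_zero_norm' ?_
        (tendsto_const_div_atTop_nhds_zero_nat (2*((2*m:ℕ):ℝ)*π^2))
      filter_upwards [eventually_ge_atTop 1] with k hk
      rw [Real.norm_eq_abs, hA]
      exact key_bound (2*m) hEven k hk
    have h2 := hdiff.add (tendsto_const_nhds (x := A) (f := atTop))
    simpa using h2
  have hval : A = 16/π * (((2*m).factorial : ℝ) / ((2*m)‼ : ℝ)^2) * SS m := by
    rw [hA, intF m, show gI (2*m) (π/2) = π/2 * cp m from W_eq m, J_closed m,
      fac_div_df_sq m hm1]
    field_simp
    ring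
  have hrange : (2*m - 2)/2 + 1 = m := by omega
  have hsum : (∑ j ∈ Finset.range ((2*m - 2)/2 + 1),
      (Nat.doubleFactorial (2 * j) : ℝ) / (Nat.doubleFactorial (2 * j + 1) : ℝ) *
        (1 / (2 * (j : ℝ) + 2))) = SS m := by
    rw [hrange]; rfl
  rw [hsum, ← hval]
  exact htend

-- #print axioms area_even_power_doubleFactorial
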